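/- Let C_i ⊆ H, i = 0,...,m-1, be nonempty closed convex sets with int(∩_{i=0}^{m-1} C_i) ≠ ∅ and fix r ∈ {2,...,m-1}. Define S_d := T_{C_{((r-1)d-(r-1)) mod m},...,C_{((r-1)d) mod m}} and Q := S_m ∘ ... ∘ S_1. Then for any x⁰ ∈ H, the sequence x^{k+1} = Q(x^k) converges weakly to a point x* ∈ ∩_{i=0}^{m-1} C_i. -/

import Mathlib

open Filter Topology RealInnerProductSpace

section Aux
variable {H : Type*} [NormedAddCommGroup H] [InnerProductSpace ℝ H]

/-- If two points have equal distance to every point of a ball, they are equal. -/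
lemma aux_eq_of_ball {z : H} {ε : ℝ} (hε : 0 < ε) {u v : H}
    (h : ∀ w ∈ Metric.ball z ε, ‖u - w‖ = ‖v - w‖) : u = v := by
  have h0 := h z (Metric.mem_ball_self hε)
  by_contra hne
  have hd : u - v ≠ 0 := sub_ne_zero.mpr hne
  have hdn : 0 < ‖u - v‖ := norm_pos_iff.mpr hd
  set c : ℝ := ε / (2 * ‖u - v‖) with hc
  have hcpos : 0 < c := by positivity
  have hcn : c * ‖u - v‖ = ε / 2 := by field_simp [hc]; rw [hc]; field_simp [hdn.ne']
  set w : H := z + c • (u - v) with hw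
  have hwmem : w ∈ Metric.ball z ε := by
    simp only [hw, Metric.mem_ball, dist_eq_norm, add_sub_cancel_left, norm_smul,
      Real.norm_eq_abs, abs_of_pos hcpos]
    rw [hcn]; linarith
  have h1 := h w hwmem
  have eu : u - w = (u - z) - c • (u - v) := by rw [hw]; abel
  have ev : v - w = (v - z) - c • (u - v) := by rw [hw]; abel
  have squ : ‖u - w‖ ^ 2 = ‖u - z‖ ^ 2 - 2 * (c * ⟪u - z, u - v⟫) + (c * ‖u - v‖) ^ 2 := by
    rw [eu, norm_sub_sq_real, real_inner_smul_right, norm_smul, Real.norm_eq_abs,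
      abs_of_pos hcpos]
  have sqv : ‖v - w‖ ^ 2 = ‖v - z‖ ^ 2 + 2 * (c * ⟪v - z, v - u⟫) + (c * ‖u - v‖) ^ 2 := by
    have h3 : ⟪v - z, u - v⟫ = - ⟪v - z, v - u⟫ := by
      rw [← inner_neg_right]; congr 1; abel
    rw [ev, norm_sub_sq_real, real_inner_smul_right, norm_smul, Real.norm_eq_abs,
      abs_of_pos hcpos, h3]; ring
  have hinner : ⟪u - z, u - v⟫ + ⟪v - z, v - u⟫ = ‖u - v‖ ^ 2 := by
    have : ⟪u - z, u - v⟫ + ⟪v - z, v - u⟫ = ⟪u - v, u - v⟫ := by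
      have h2 : ⟪v - z, v - u⟫ = - ⟪v - z, u - v⟫ := by
        rw [← inner_neg_right]; congr 1; abel
      rw [h2, ← sub_eq_add_neg, ← inner_sub_left]
      congr 1; abel
    rw [this, real_inner_self_eq_norm_sq]
  have hsq : ‖u - w‖ ^ 2 = ‖v - w‖ ^ 2 := by rw [h1]
  have hsq0 : ‖u - z‖ ^ 2 = ‖v - z‖ ^ 2 := by rw [h0]
  nlinarith [mul_pos hcpos (pow_pos hdn 2)]

/-- A fold of nonexpansive maps is nonexpansive. -/
lemma aux_foldl_nonexp : ∀ (n : ℕ) (g : H → Fin n → H),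
    (∀ (i : Fin n) (a b : H), ‖g a i - g b i‖ ≤ ‖a - b‖) →
    ∀ a b : H, ‖Fin.foldl n g a - Fin.foldl n g b‖ ≤ ‖a - b‖ := by
  intro n
  induction n with
  | zero => intro g hg a b; simp [Fin.foldl_zero]
  | succ n ih =>
    intro g hg a b
    rw [Fin.foldl_succ, Fin.foldl_succ]
    exact le_trans (ih _ (fun i a b => hg i.succ a b) _ _) (hg 0 a b)

/-- A fold fixes a common fixed point. -/
lemma aux_foldl_fixed : ∀ (n : ℕ) (g : H → Fin n → H) (w : H),
    (∀ i : Fin n, g w i = w) → Fin.foldl n g w = w := by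
  intro n
  induction n with
  | zero => intro g w hg; simp [Fin.foldl_zero]
  | succ n ih =>
    intro g w hg
    rw [Fin.foldl_succ, hg 0]
    exact ih _ w (fun i => hg i.succ)

/-- If a fold of nonexpansive maps, all fixing a ball pointwise and "strict" on the ball,
fixes `x`, then each individual step fixes `x`. -/
lemma aux_foldl_fix_each : ∀ (n : ℕ) (g : H → Fin n → H) {z : H} {ε : ℝ}, 0 < ε →
    (∀ (i : Fin n) (a b : H), ‖g a i - g b i‖ ≤ ‖a - b‖) →
    (∀ (i : Fin n), ∀ w ∈ Metric.ball z ε, g w i = w) →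
    (∀ (i : Fin n) (y : H),
      (∀ w ∈ Metric.ball z ε, ‖g y i - w‖ = ‖y - w‖) → g y i = y) →
    ∀ x : H, Fin.foldl n g x = x → ∀ i : Fin n, g x i = x := by
  intro n
  induction n with
  | zero => intro g z ε hε _ _ _ x _ i; exact absurd i.isLt (by omega)
  | succ n ih =>
    intro g z ε hε hne hfix hstrict x hx
    rw [Fin.foldl_succ] at hx
    have key : ∀ w ∈ Metric.ball z ε, ‖g x 0 - w‖ = ‖x - w‖ := by
      intro w hw
      have h1 : ‖Fin.foldl n (fun y i => g y i.succ) (g x 0) - w‖ ≤ ‖g x 0 - w‖ := by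
        have hfw : Fin.foldl n (fun y i => g y i.succ) w = w :=
          aux_foldl_fixed n _ w (fun i => hfix i.succ w hw)
        calc ‖Fin.foldl n (fun y i => g y i.succ) (g x 0) - w‖
            = ‖Fin.foldl n (fun y i => g y i.succ) (g x 0) -
              Fin.foldl n (fun y i => g y i.succ) w‖ := by rw [hfw]
          _ ≤ ‖g x 0 - w‖ := aux_foldl_nonexp n _ (fun i a b => hne i.succ a b) _ _
      have h2 : ‖g x 0 - w‖ ≤ ‖x - w‖ := by
        calc ‖g x 0 - w‖ = ‖g x 0 - g w 0‖ := by rw [hfix 0 w hw]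
          _ ≤ ‖x - w‖ := hne 0 x w
      rw [hx] at h1
      linarith
    have h0 : g x 0 = x := hstrict 0 x key
    rw [h0] at hx
    have hrest := ih (fun y i => g y i.succ) hε (fun i a b => hne i.succ a b)
      (fun i w hw => hfix i.succ w hw) (fun i y hy => hstrict i.succ y hy) x hx
    intro i
    induction i using Fin.cases with
    | zero => exact h0
    | succ j => exact hrest j

end Aux

set_option maxHeartbeats 2000000 in
/-- For nonempty closed convex sets `C₀,…,C_{m-1}` with `int(⋂ C_i) ≠ ∅` and
`r ∈ {2,…,m-1}`, the iterates `x^{k+1} = Q(x^k)` of the cyclic `r`-sets-DR operator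
`Q = S_m ∘ ⋯ ∘ S_1` converge weakly to a point in `⋂_{i=0}^{m-1} C_i`. -/
theorem cyclic_rSetsDR_weak_convergence
    {H : Type*} [NormedAddCommGroup H] [InnerProductSpace ℝ H] [CompleteSpace H]
    (m r : ℕ) (hr : 2 ≤ r) (hrm : r ≤ m - 1)
    (C : ℕ → Set H)
    (hne : ∀ i < m, (C i).Nonempty) (hcl : ∀ i < m, IsClosed (C i))
    (hcv : ∀ i < m, Convex ℝ (C i))
    (hint : (interior (⋂ i ∈ Finset.range m, C i)).Nonempty)
    (P : ℕ → H → H)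
    (hP : ∀ i < m, ∀ x : H, P i x ∈ C i ∧ ∀ y ∈ C i, ‖x - P i x‖ ≤ ‖x - y‖)
    (S : ℕ → H → H)
    (hS : ∀ d : ℕ, ∀ x : H, S d x = (1 / 2 : ℝ) • (x +
      Fin.foldl r (fun y (j : Fin r) => (2 : ℝ) • P (((r - 1) * (d - 1) + j.val) % m) y - y) x))
    (Q : H → H)
    (hQ : ∀ x : H, Q x = Fin.foldl m (fun y (d : Fin m) => S (d.val + 1) y) x)
    (x : ℕ → H) (hiter : ∀ k : ℕ, x (k + 1) = Q (x k)) :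
    ∃ xs ∈ ⋂ i ∈ Finset.range m, C i,
      ∀ y : H, Tendsto (fun k => ⟪x k, y⟫) atTop (𝓝 ⟪xs, y⟫) := by
  have hm0 : 0 < m := by omega
  -- interior ball
  obtain ⟨z, hz⟩ := hint
  obtain ⟨ε, hε, hball⟩ := Metric.mem_nhds_iff.mp (mem_interior_iff_mem_nhds.mp hz)
  have hballC : ∀ w ∈ Metric.ball z ε, ∀ i < m, w ∈ C i := by
    intro w hw i hi
    have h1 := hball hw
    simp only [Set.mem_iInter] at h1
    exact h1 i (Finset.mem_range.mpr hi)
  -- projections fix points of the sets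
  have hPfix : ∀ i < m, ∀ w ∈ C i, P i w = w := by
    intro i hi w hw
    have h1 := (hP i hi w).2 w hw
    simp only [sub_self, norm_zero] at h1
    have h2 : ‖w - P i w‖ = 0 := le_antisymm h1 (norm_nonneg _)
    have h3 : w - P i w = 0 := norm_eq_zero.mp h2
    exact (sub_eq_zero.mp h3).symm
  -- variational inequality for the projection
  have hvar : ∀ i < m, ∀ a : H, ∀ y ∈ C i, ⟪a - P i a, y - P i a⟫ ≤ 0 := by
    intro i hi a y hy
    by_contra hcon
    push_neg at hcon
    set ip : ℝ := ⟪a - P i a, y - P i a⟫ with hip_def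
    set K : ℝ := ‖y - P i a‖ ^ 2 with hK_def
    have hK : 0 ≤ K := sq_nonneg _
    have hs : 0 < K + ip := by positivity
    set t : ℝ := ip / (K + ip) with ht_def
    have ht : 0 < t := by positivity
    have ht1 : t ≤ 1 := by rw [ht_def, div_le_one hs]; linarith
    have hq : t • y + (1 - t) • (P i a) ∈ C i :=
      hcv i hi hy (hP i hi a).1 (le_of_lt ht) (by linarith) (by ring)
    have hd := (hP i hi a).2 _ hq
    have he : a - (t • y + (1 - t) • (P i a)) = (a - P i a) - t • (y - P i a) := by
      module
    have hsq : ‖a - P i a‖ ^ 2 ≤ ‖a - (t • y + (1 - t) • (P i a))‖ ^ 2 := by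
      exact pow_le_pow_left₀ (norm_nonneg _) hd 2
    have hexp : ‖(a - P i a) - t • (y - P i a)‖ ^ 2
        = ‖a - P i a‖ ^ 2 - 2 * (t * ip) + t ^ 2 * K := by
      rw [norm_sub_sq_real, real_inner_smul_right, norm_smul, Real.norm_eq_abs,
        abs_of_pos ht, hK_def]
      ring
    rw [he, hexp] at hsq
    -- so 2 * (t * ip) ≤ t^2 * K, hence 2 * ip ≤ t * K
    have h1 : t * (2 * ip) ≤ t * (t * K) := by nlinarith
    have h2 : 2 * ip ≤ t * K := le_of_mul_le_mul_left h1 ht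
    have h3 : t * K ≤ ip := by
      rw [ht_def, div_mul_eq_mul_div, div_le_iff₀ hs]
      nlinarith
    linarith
  -- reflections are nonexpansive
  have hrefl : ∀ i < m, ∀ a b : H,
      ‖((2:ℝ) • P i a - a) - ((2:ℝ) • P i b - b)‖ ≤ ‖a - b‖ := by
    intro i hi a b
    have h1 := hvar i hi a (P i b) (hP i hi b).1
    have h2 := hvar i hi b (P i a) (hP i hi a).1
    have hfirm : ‖P i a - P i b‖ ^ 2 ≤ ⟪a - b, P i a - P i b⟫ := by
      have e1 : ⟪a - P i a, P i b - P i a⟫ = - ⟪a - P i a, P i a - P i b⟫ := by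
        rw [← inner_neg_right]; congr 1; abel
      have e2 : ⟪a - P i a, P i a - P i b⟫ - ⟪b - P i b, P i a - P i b⟫
          = ⟪(a - b) - (P i a - P i b), P i a - P i b⟫ := by
        rw [← inner_sub_left]; congr 1; abel
      have e3 : ⟪(a - b) - (P i a - P i b), P i a - P i b⟫
          = ⟪a - b, P i a - P i b⟫ - ‖P i a - P i b‖ ^ 2 := by
        rw [inner_sub_left, real_inner_self_eq_norm_sq]
      linarith
    have e4 : ((2:ℝ) • P i a - a) - ((2:ℝ) • P i b - b)
        = (2:ℝ) • (P i a - P i b) - (a - b) := by module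
    have e5 : ‖(2:ℝ) • (P i a - P i b) - (a - b)‖ ^ 2
        = 4 * ‖P i a - P i b‖ ^ 2 - 4 * ⟪a - b, P i a - P i b⟫ + ‖a - b‖ ^ 2 := by
      rw [norm_sub_sq_real, real_inner_smul_left, norm_smul]
      rw [real_inner_comm]
      simp [Real.norm_eq_abs]
      ring
    have hsq : ‖((2:ℝ) • P i a - a) - ((2:ℝ) • P i b - b)‖ ^ 2 ≤ ‖a - b‖ ^ 2 := by
      rw [e4, e5]; linarith
    nlinarith [norm_nonneg (((2:ℝ) • P i a - a) - ((2:ℝ) • P i b - b)), norm_nonneg (a - b)]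
  -- the inner reflection-composition operators
  obtain ⟨N, hN_def⟩ : ∃ N : ℕ → H → H, ∀ (d : ℕ) (y : H), N d y =
      Fin.foldl r (fun y (j : Fin r) => (2 : ℝ) • P (((r - 1) * (d - 1) + j.val) % m) y - y) y :=
    ⟨_, fun d y => rfl⟩
  have hSN : ∀ (d : ℕ) (y : H), S d y = (1 / 2 : ℝ) • (y + N d y) := by
    intro d y; rw [hN_def]; exact hS d y
  have hstep_ne : ∀ (d : ℕ) (j : Fin r) (a b : H),
      ‖((2 : ℝ) • P (((r - 1) * (d - 1) + j.val) % m) a - a)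
        - ((2 : ℝ) • P (((r - 1) * (d - 1) + j.val) % m) b - b)‖ ≤ ‖a - b‖ :=
    fun d j a b => hrefl _ (Nat.mod_lt _ hm0) a b
  have hstep_fix : ∀ (d : ℕ) (j : Fin r), ∀ w ∈ Metric.ball z ε,
      (2 : ℝ) • P (((r - 1) * (d - 1) + j.val) % m) w - w = w := by
    intro d j w hw
    rw [hPfix _ (Nat.mod_lt _ hm0) w (hballC w hw _ (Nat.mod_lt _ hm0)), two_smul]
    abel
  have hN_ne : ∀ (d : ℕ) (a b : H), ‖N d a - N d b‖ ≤ ‖a - b‖ := by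
    intro d a b
    rw [hN_def, hN_def]
    exact aux_foldl_nonexp r _ (fun j a b => hstep_ne d j a b) a b
  have hN_fix : ∀ (d : ℕ), ∀ w ∈ Metric.ball z ε, N d w = w := by
    intro d w hw
    rw [hN_def]
    exact aux_foldl_fixed r _ w (fun j => hstep_fix d j w hw)
  have hS_ne : ∀ (d : ℕ) (a b : H), ‖S d a - S d b‖ ≤ ‖a - b‖ := by
    intro d a b
    rw [hSN d a, hSN d b, ← smul_sub, norm_smul]
    have e1 : (a + N d a) - (b + N d b) = (a - b) + (N d a - N d b) := by abel
    rw [e1]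
    have h1 : ‖(a - b) + (N d a - N d b)‖ ≤ ‖a - b‖ + ‖N d a - N d b‖ := norm_add_le _ _
    have h2 := hN_ne d a b
    simp only [Real.norm_eq_abs]
    rw [abs_of_pos (by norm_num : (0:ℝ) < 1/2)]
    linarith
  have hS_fix : ∀ (d : ℕ), ∀ w ∈ Metric.ball z ε, S d w = w := by
    intro d w hw
    rw [hSN d w, hN_fix d w hw, ← two_smul ℝ w, smul_smul]
    norm_num
  have hS_strict : ∀ (d : ℕ) (y : H),
      (∀ w ∈ Metric.ball z ε, ‖S d y - w‖ = ‖y - w‖) → S d y = y := by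
    intro d y hy
    have hNy : N d y = y := by
      have h1 := hy z (Metric.mem_ball_self hε)
      have hb : ‖N d y - z‖ ≤ ‖y - z‖ := by
        calc ‖N d y - z‖ = ‖N d y - N d z‖ := by rw [hN_fix d z (Metric.mem_ball_self hε)]
          _ ≤ ‖y - z‖ := hN_ne d y z
      have havg : S d y - z = (1 / 2 : ℝ) • ((y - z) + (N d y - z)) := by
        rw [hSN d y]; module
      rw [havg, norm_smul, Real.norm_eq_abs, abs_of_pos (by norm_num : (0:ℝ) < 1/2)] at h1
      have h2 : ‖(y - z) + (N d y - z)‖ = 2 * ‖y - z‖ := by linarith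
      have hip : ⟪y - z, N d y - z⟫ ≤ ‖y - z‖ * ‖N d y - z‖ := real_inner_le_norm _ _
      have hab : ‖(y - z) + (N d y - z)‖ ^ 2
          = ‖y - z‖ ^ 2 + 2 * ⟪y - z, N d y - z⟫ + ‖N d y - z‖ ^ 2 := norm_add_sq_real _ _
      rw [h2] at hab
      have hsub : ‖(y - z) - (N d y - z)‖ ^ 2
          = ‖y - z‖ ^ 2 - 2 * ⟪y - z, N d y - z⟫ + ‖N d y - z‖ ^ 2 := norm_sub_sq_real _ _
      have hneg : ‖(y - z) - (N d y - z)‖ ^ 2 ≤ 0 := by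
        nlinarith [norm_nonneg (y - z), norm_nonneg (N d y - z)]
      have h0 : ‖(y - z) - (N d y - z)‖ = 0 := by
        nlinarith [norm_nonneg ((y - z) - (N d y - z))]
      have h3 : (y - z) - (N d y - z) = 0 := norm_eq_zero.mp h0
      have h4 : y - N d y = 0 := by rw [← h3]; abel
      exact (sub_eq_zero.mp h4).symm
    rw [hSN d y, hNy, ← two_smul ℝ y, smul_smul]
    norm_num
  -- properties of Q
  have hQ_ne : ∀ a b : H, ‖Q a - Q b‖ ≤ ‖a - b‖ := by
    intro a b
    rw [hQ a, hQ b]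
    exact aux_foldl_nonexp m _ (fun d a b => hS_ne (d.val + 1) a b) a b
  have hQ_fix : ∀ w ∈ Metric.ball z ε, Q w = w := by
    intro w hw
    rw [hQ w]
    exact aux_foldl_fixed m _ w (fun d => hS_fix (d.val + 1) w hw)
  -- Fejér monotonicity
  have hfej : ∀ (k : ℕ), ∀ w ∈ Metric.ball z ε, ‖x (k + 1) - w‖ ≤ ‖x k - w‖ := by
    intro k w hw
    rw [hiter k]
    calc ‖Q (x k) - w‖ = ‖Q (x k) - Q w‖ := by rw [hQ_fix w hw]
      _ ≤ ‖x k - w‖ := hQ_ne (x k) w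
  -- quantitative decrease
  have hdec : ∀ k : ℕ, ε * ‖x (k + 1) - x k‖ ≤ ‖x k - z‖ ^ 2 - ‖x (k + 1) - z‖ ^ 2 := by
    intro k
    by_cases hu : x k - x (k + 1) = 0
    · have he : x (k + 1) = x k := (sub_eq_zero.mp hu).symm
      rw [he]; simp
    · have hun : 0 < ‖x k - x (k + 1)‖ := norm_pos_iff.mpr hu
      set u : H := x k - x (k + 1) with hu_def
      set c : ℝ := ε / (2 * ‖u‖) with hc_def
      have hcpos : 0 < c := by positivity
      have hcn : c * ‖u‖ = ε / 2 := by field_simp [hc_def]; rw [hc_def]; field_simp [hun.ne']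
      set w : H := z + c • u with hw_def
      have hwmem : w ∈ Metric.ball z ε := by
        simp only [hw_def, Metric.mem_ball, dist_eq_norm, add_sub_cancel_left, norm_smul,
          Real.norm_eq_abs, abs_of_pos hcpos]
        rw [hcn]; linarith
      have hf := hfej k w hwmem
      have hfsq : ‖x (k + 1) - w‖ ^ 2 ≤ ‖x k - w‖ ^ 2 := pow_le_pow_left₀ (norm_nonneg _) hf 2
      have e1 : x (k + 1) - w = (x (k + 1) - z) - c • u := by rw [hw_def]; abel
      have e2 : x k - w = (x k - z) - c • u := by rw [hw_def]; abel
      have sq1 : ‖x (k + 1) - w‖ ^ 2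
          = ‖x (k + 1) - z‖ ^ 2 - 2 * (c * ⟪x (k + 1) - z, u⟫) + (c * ‖u‖) ^ 2 := by
        rw [e1, norm_sub_sq_real, real_inner_smul_right, norm_smul, Real.norm_eq_abs,
          abs_of_pos hcpos]
      have sq2 : ‖x k - w‖ ^ 2
          = ‖x k - z‖ ^ 2 - 2 * (c * ⟪x k - z, u⟫) + (c * ‖u‖) ^ 2 := by
        rw [e2, norm_sub_sq_real, real_inner_smul_right, norm_smul, Real.norm_eq_abs,
          abs_of_pos hcpos]
      have hinner : ⟪x k - z, u⟫ - ⟪x (k + 1) - z, u⟫ = ‖u‖ ^ 2 := by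
        rw [← inner_sub_left]
        have e3 : (x k - z) - (x (k + 1) - z) = u := by rw [hu_def]; abel
        rw [e3, real_inner_self_eq_norm_sq]
      have hcu : 2 * (c * ‖u‖ ^ 2) = ε * ‖u‖ := by
        have h5 : c * ‖u‖ ^ 2 = (ε / 2) * ‖u‖ := by rw [pow_two, ← mul_assoc, hcn]
        rw [h5]; ring
      have hnorm : ‖x (k + 1) - x k‖ = ‖u‖ := by rw [hu_def, norm_sub_rev]
      have hprod : c * ⟪x k - z, u⟫ - c * ⟪x (k + 1) - z, u⟫ = c * ‖u‖ ^ 2 := by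
        rw [← mul_sub, hinner]
      rw [hnorm]
      linarith [hfsq, sq1, sq2, hprod, hcu]
  -- summability and strong convergence
  have hsums : ∀ n : ℕ, ∑ k ∈ Finset.range n, ‖x (k + 1) - x k‖ ≤ ‖x 0 - z‖ ^ 2 / ε := by
    intro n
    have htel : ∑ k ∈ Finset.range n, (‖x k - z‖ ^ 2 - ‖x (k + 1) - z‖ ^ 2)
        = ‖x 0 - z‖ ^ 2 - ‖x n - z‖ ^ 2 :=
      Finset.sum_range_sub' (fun k => ‖x k - z‖ ^ 2) n
    have h1 : ε * ∑ k ∈ Finset.range n, ‖x (k + 1) - x k‖ ≤ ‖x 0 - z‖ ^ 2 := by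
      rw [Finset.mul_sum]
      calc ∑ k ∈ Finset.range n, ε * ‖x (k + 1) - x k‖
          ≤ ∑ k ∈ Finset.range n, (‖x k - z‖ ^ 2 - ‖x (k + 1) - z‖ ^ 2) :=
            Finset.sum_le_sum (fun k _ => hdec k)
        _ = ‖x 0 - z‖ ^ 2 - ‖x n - z‖ ^ 2 := htel
        _ ≤ ‖x 0 - z‖ ^ 2 := by nlinarith [sq_nonneg (‖x n - z‖)]
    rw [le_div_iff₀ hε, mul_comm]
    exact h1
  have hsummable : Summable (fun k => ‖x (k + 1) - x k‖) :=
    summable_of_sum_range_le (fun n => norm_nonneg _) hsums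
  have hcauchy : CauchySeq x := by
    apply cauchySeq_of_summable_dist
    apply Summable.congr hsummable
    intro k
    rw [dist_eq_norm, norm_sub_rev]
  obtain ⟨xs, hxs⟩ := cauchySeq_tendsto_of_complete hcauchy
  -- the limit is a fixed point of Q
  have hQxs : Q xs = xs := by
    have hlip : LipschitzWith 1 Q := LipschitzWith.of_dist_le_mul (fun a b => by
      rw [NNReal.coe_one, one_mul, dist_eq_norm, dist_eq_norm]; exact hQ_ne a b)
    have h1 : Tendsto (fun k => Q (x k)) atTop (𝓝 (Q xs)) :=
      (hlip.continuous.tendsto xs).comp hxs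
    have h2 : Tendsto (fun k => x (k + 1)) atTop (𝓝 xs) :=
      hxs.comp (tendsto_add_atTop_nat 1)
    have h3 : (fun k => Q (x k)) = fun k => x (k + 1) := funext fun k => (hiter k).symm
    rw [h3] at h1
    exact tendsto_nhds_unique h1 h2
  -- each S fixes xs
  have hSfixall : ∀ d : Fin m, S (d.val + 1) xs = xs := by
    refine aux_foldl_fix_each m (fun y d => S (d.val + 1) y) hε
      (fun d a b => hS_ne (d.val + 1) a b)
      (fun d w hw => hS_fix (d.val + 1) w hw)
      (fun d y hy => hS_strict (d.val + 1) y hy) xs ?_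
    rw [← hQ xs]; exact hQxs
  -- xs belongs to every C i
  have hC : ∀ i < m, xs ∈ C i := by
    intro i hi
    have hr1 : 0 < r - 1 := by omega
    have hk : i / (r - 1) < m := lt_of_le_of_lt (Nat.div_le_self _ _) hi
    have hj : i % (r - 1) < r := lt_of_lt_of_le (Nat.mod_lt _ hr1) (by omega)
    have hidx : (r - 1) * (i / (r - 1)) + i % (r - 1) = i := Nat.div_add_mod i (r - 1)
    have hSfix := hSfixall ⟨i / (r - 1), hk⟩
    -- N fixes xs
    have hNxs : N (i / (r - 1) + 1) xs = xs := by
      rw [hSN] at hSfix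
      have h2 : (2:ℝ) • ((1 / 2 : ℝ) • (xs + N (i / (r - 1) + 1) xs)) = (2:ℝ) • xs := by
        rw [hSfix]
      rw [smul_smul] at h2
      norm_num at h2
      have h3 : xs + N (i / (r - 1) + 1) xs = xs + xs := by
        rw [h2, two_smul]
      exact add_left_cancel h3
    rw [hN_def] at hNxs
    have hall := aux_foldl_fix_each r
      (fun y (j : Fin r) => (2 : ℝ) • P (((r - 1) * ((i / (r - 1) + 1) - 1) + j.val) % m) y - y)
      hε (fun j a b => hstep_ne (i / (r - 1) + 1) j a b)
      (fun j w hw => hstep_fix (i / (r - 1) + 1) j w hw)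
      (fun j y hy => aux_eq_of_ball hε hy) xs hNxs ⟨i % (r - 1), hj⟩
    simp only [Nat.add_sub_cancel] at hall
    have hmod : ((r - 1) * (i / (r - 1)) + i % (r - 1)) % m = i := by
      rw [hidx]; exact Nat.mod_eq_of_lt hi
    rw [hmod] at hall
    -- from 2 • P i xs - xs = xs deduce P i xs = xs
    have hPxs : P i xs = xs := by
      have h4 : (2:ℝ) • P i xs = (2:ℝ) • xs := by
        have := hall
        rw [sub_eq_iff_eq_add] at this
        rw [this, two_smul]
      have := smul_right_injective H (by norm_num : (2:ℝ) ≠ 0) h4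
      exact this
    rw [← hPxs]
    exact (hP i hi xs).1
  refine ⟨xs, ?_, ?_⟩
  · simp only [Set.mem_iInter]
    intro i hi
    exact hC i (Finset.mem_range.mp hi)
  · intro y
    exact Filter.Tendsto.inner hxs tendsto_const_nhds
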